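/- Let h > 0, let D_h = {i ∈ ℤ : |ih| < 1}, and let w : ℤ → ℝ satisfy w_j > 0 for all j ≠ 0, w_{−j} = w_j, and Σ_{j≠0} w_j < ∞. Define Lu_i = Σ_{j∈ℤ, j≠0} (u_i − u_{i−j}) w_j for bounded grid functions u : ℤ → ℝ. Suppose there exists a grid function v : ℤ → ℝ with v_i = 0 for all i ∉ D_h, 0 ≤ v_i ≤ 4 for all i ∈ ℤ, and Lv_i ≥ 1 for all i ∈ D_h. Then every bounded grid function u : ℤ → ℝ satisfies max_{i ∈ D_h} |u_i| ≤ sup_{i ∉ D_h} |u_i| + 4 · max_{i ∈ D_h} |Lu_i|. -/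

import Mathlib

/-- The discrete operator `L u_i = Σ_{j∈ℤ, j≠0} (u_i − u_{i−j}) w_j`. -/
noncomputable def discL (w : ℤ → ℝ) (u : ℤ → ℝ) (i : ℤ) : ℝ :=
  ∑' j : {j : ℤ // j ≠ 0}, (u i - u (i - (j : ℤ))) * w (j : ℤ)

lemma Dh_finite (h : ℝ) (hh : 0 < h) : {i : ℤ | |(i : ℝ) * h| < 1}.Finite := by
  apply Set.Finite.subset (Set.finite_Icc (-(⌈1/h⌉)) ⌈1/h⌉)
  intro x hx
  simp only [Set.mem_setOf_eq] at hx
  rw [abs_mul, abs_of_pos hh] at hx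
  have h1 : |(x : ℝ)| < 1 / h := (lt_div_iff₀ hh).mpr hx
  have h2 : (1:ℝ)/h ≤ (⌈1/h⌉ : ℝ) := Int.le_ceil _
  have h3 : (|x| : ℝ) < (⌈1/h⌉ : ℝ) := by push_cast; linarith
  have h4 : |x| ≤ ⌈1/h⌉ := by exact_mod_cast h3.le
  simp only [Set.mem_Icc]
  exact abs_le.mp h4

lemma discL_summable (w : ℤ → ℝ) (hwpos : ∀ j : ℤ, j ≠ 0 → 0 < w j)
    (hwsum : Summable (fun j : {j : ℤ // j ≠ 0} => w (j : ℤ)))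
    (g : ℤ → ℝ) (B : ℝ) (hg : ∀ i, |g i| ≤ B) (i : ℤ) :
    Summable (fun j : {j : ℤ // j ≠ 0} => (g i - g (i - (j : ℤ))) * w (j : ℤ)) := by
  apply Summable.of_norm_bounded (g := fun j : {j : ℤ // j ≠ 0} => (2*B) * w (j:ℤ)) (hwsum.mul_left _)
  intro j
  have hw := (hwpos j j.2).le
  rw [Real.norm_eq_abs, abs_mul, abs_of_nonneg hw]
  apply mul_le_mul_of_nonneg_right _ hw
  have h1 := hg i
  have h2 := hg (i - (j:ℤ))
  have h3 := norm_sub_le (g i) (g (i - (j:ℤ)))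
  simp only [Real.norm_eq_abs] at h3
  linarith

lemma discL_helper (h : ℝ) (hh : 0 < h) (w : ℤ → ℝ)
    (hwpos : ∀ j : ℤ, j ≠ 0 → 0 < w j)
    (hwsum : Summable (fun j : {j : ℤ // j ≠ 0} => w (j : ℤ)))
    (v : ℤ → ℝ)
    (hv0 : ∀ i : ℤ, ¬ |(i : ℝ) * h| < 1 → v i = 0)
    (hvb : ∀ i : ℤ, 0 ≤ v i ∧ v i ≤ 4)
    (hvL : ∀ i : ℤ, |(i : ℝ) * h| < 1 → 1 ≤ discL w v i)
    (u : ℤ → ℝ) (B : ℝ) (hub : ∀ i, |u i| ≤ B)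
    (M K : ℝ) (hK : 0 ≤ K)
    (hM : ∀ j : ℤ, ¬ |(j : ℝ) * h| < 1 → u j ≤ M)
    (hLK : ∀ i : ℤ, |(i : ℝ) * h| < 1 → discL w u i ≤ K) :
    ∀ i : ℤ, |(i : ℝ) * h| < 1 → u i ≤ M + 4 * K := by
  intro i hi
  have hS := Dh_finite h hh
  have key : ∀ ε > (0:ℝ), u i ≤ M + (K + ε) * v i := by
    intro ε hε
    by_contra hcon
    push_neg at hcon
    set c := K + ε with hc
    set φ := fun j : ℤ => M + c * v j - u j with hφ
    have hφneg : φ i < 0 := by simp only [hφ]; linarith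
    obtain ⟨a, ha, hamin⟩ := Set.exists_min_image _ φ hS ⟨i, hi⟩
    have haD : |(a : ℝ) * h| < 1 := ha
    have hai : φ a ≤ φ i := hamin i hi
    have hglob : ∀ j : ℤ, φ a ≤ φ j := by
      intro j
      by_cases hj : |(j : ℝ) * h| < 1
      · exact hamin j hj
      · have hv : v j = 0 := hv0 j hj
        have h0 : 0 ≤ φ j := by simp only [hφ, hv]; linarith [hM j hj]
        linarith
    have hc0 : 0 ≤ c := by linarith
    have hvB : ∀ j, |v j| ≤ 4 := fun j => abs_le.mpr ⟨by linarith [(hvb j).1], (hvb j).2⟩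
    have sv := discL_summable w hwpos hwsum v 4 hvB a
    have su := discL_summable w hwpos hwsum u B hub a
    have hlin : discL w φ a = c * discL w v a - discL w u a := by
      unfold discL
      rw [← tsum_mul_left, ← Summable.tsum_sub (sv.mul_left c) su]
      apply tsum_congr
      intro j
      simp only [hφ]
      ring
    have hnp : discL w φ a ≤ 0 := by
      unfold discL
      apply tsum_nonpos
      intro j
      have h1 : φ a - φ (a - (j:ℤ)) ≤ 0 := sub_nonpos.mpr (hglob _)
      exact mul_nonpos_of_nonpos_of_nonneg h1 (hwpos _ j.2).le
    have h2 : 1 ≤ discL w v a := hvL a haD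
    have h3 : discL w u a ≤ K := hLK a haD
    nlinarith
  have h4 : ∀ ε > (0:ℝ), u i ≤ (M + 4*K) + ε := by
    intro ε hε
    have hk := key (ε/4) (by linarith)
    have hv4 := (hvb i).2
    have hv0' := (hvb i).1
    nlinarith
  exact le_of_forall_pos_le_add h4

theorem discrete_stability (h : ℝ) (hh : 0 < h) (w : ℤ → ℝ)
    (hwpos : ∀ j : ℤ, j ≠ 0 → 0 < w j) (hwsymm : ∀ j : ℤ, w (-j) = w j)
    (hwsum : Summable (fun j : {j : ℤ // j ≠ 0} => w (j : ℤ)))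
    (v : ℤ → ℝ)
    (hv0 : ∀ i : ℤ, ¬ |(i : ℝ) * h| < 1 → v i = 0)
    (hvb : ∀ i : ℤ, 0 ≤ v i ∧ v i ≤ 4)
    (hvL : ∀ i : ℤ, |(i : ℝ) * h| < 1 → 1 ≤ discL w v i)
    (u : ℤ → ℝ) (hub : ∃ B : ℝ, ∀ i : ℤ, |u i| ≤ B) :
    ∀ i : ℤ, |(i : ℝ) * h| < 1 →
      |u i| ≤ (⨆ i' : {i' : ℤ // ¬ |(i' : ℝ) * h| < 1}, |u (i' : ℤ)|)
        + 4 * ⨆ i' : {i' : ℤ // |(i' : ℝ) * h| < 1}, |discL w u (i' : ℤ)| := by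
  obtain ⟨B, hB⟩ := hub
  set M := ⨆ i' : {i' : ℤ // ¬ |(i' : ℝ) * h| < 1}, |u (i' : ℤ)| with hMdef
  set K := ⨆ i' : {i' : ℤ // |(i' : ℝ) * h| < 1}, |discL w u (i' : ℤ)| with hKdef
  have hS := Dh_finite h hh
  haveI : Finite {i' : ℤ // |(i' : ℝ) * h| < 1} := hS.to_subtype
  have hbddK : BddAbove (Set.range fun i' : {i' : ℤ // |(i' : ℝ) * h| < 1} =>
      |discL w u (i' : ℤ)|) := (Set.finite_range _).bddAbove
  have hbddM : BddAbove (Set.range fun i' : {i' : ℤ // ¬ |(i' : ℝ) * h| < 1} =>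
      |u (i' : ℤ)|) := ⟨B, by rintro x ⟨j, rfl⟩; exact hB j⟩
  have hMle : ∀ j : ℤ, ¬ |(j : ℝ) * h| < 1 → |u j| ≤ M := fun j hj =>
    le_ciSup hbddM ⟨j, hj⟩
  have hKle : ∀ i : ℤ, |(i : ℝ) * h| < 1 → |discL w u i| ≤ K := fun i hi =>
    le_ciSup hbddK ⟨i, hi⟩
  have h0D : |((0:ℤ) : ℝ) * h| < 1 := by norm_num
  have hK0 : 0 ≤ K := le_trans (abs_nonneg _) (hKle 0 h0D)
  intro i hi
  have h1 : u i ≤ M + 4 * K :=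
    discL_helper h hh w hwpos hwsum v hv0 hvb hvL u B hB M K hK0
      (fun j hj => le_trans (le_abs_self _) (hMle j hj))
      (fun i' hi' => le_trans (le_abs_self _) (hKle i' hi')) i hi
  have hnegL : ∀ i' : ℤ, discL w (fun j => -u j) i' = - discL w u i' := by
    intro i'
    unfold discL
    rw [← tsum_neg]
    apply tsum_congr
    intro j
    ring
  have h2 : -u i ≤ M + 4 * K :=
    discL_helper h hh w hwpos hwsum v hv0 hvb hvL (fun j => -u j) B
      (fun i' => by simpa using hB i') M K hK0
      (fun j hj => le_trans (neg_le_abs _) (hMle j hj))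
      (fun i' hi' => by rw [hnegL]; exact le_trans (neg_le_abs _) (hKle i' hi')) i hi
  exact abs_le.mpr ⟨by linarith, h1⟩
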